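/- Let T ∈ M_n(ℂ) and let U ∈ M_n(ℂ) be the diagonal matrix diag(1, 1, …, 1, −1) (all diagonal entries 1 except the last, which is −1). If T = U T* U, then T is UECSM. -/

import Mathlib

open Matrix

lemma mul_vecMulVec {n : ℕ} (A : Matrix (Fin n) (Fin n) ℂ) (b c : Fin n → ℂ) :
    A * vecMulVec b c = vecMulVec (A *ᵥ b) c := by
  ext i j
  simp [mul_apply, vecMulVec_apply, mulVec, dotProduct, Finset.sum_mul, mul_assoc]

lemma vecMulVec_mul {n : ℕ} (A : Matrix (Fin n) (Fin n) ℂ) (b c : Fin n → ℂ) :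
    vecMulVec b c * A = vecMulVec b (c ᵥ* A) := by
  ext i j
  simp only [mul_apply, vecMulVec_apply, vecMul, dotProduct, Finset.mul_sum]
  exact Finset.sum_congr rfl fun k _ => by ring

lemma vecMulVec_mul_vecMulVec {n : ℕ} (a b c d : Fin n → ℂ) :
    vecMulVec a b * vecMulVec c d = (b ⬝ᵥ c) • vecMulVec a d := by
  ext i j
  simp only [mul_apply, vecMulVec_apply, Matrix.smul_apply, dotProduct, smul_eq_mul, Finset.sum_mul]
  exact Finset.sum_congr rfl fun k _ => by ring

lemma one_add_smul_mul {n : ℕ} (P : Matrix (Fin n) (Fin n) ℂ) (hP : P * P = P)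
    (a b c : ℂ) (habc : a + b + a * b = c) :
    (1 + a • P) * (1 + b • P) = 1 + c • P := by
  have : a • (P * P) = a • P := by rw [hP]
  calc (1 + a • P) * (1 + b • P)
      = 1 + (a + b + a * b) • P := by
        simp only [mul_add, add_mul, one_mul, mul_one, Matrix.smul_mul, Matrix.mul_smul,
          smul_smul, hP, add_smul, mul_comm b a]
        abel
    _ = 1 + c • P := by rw [habc]

/-- `T` is unitarily equivalent to a complex symmetric matrix. -/
def UECSM {n : ℕ} (T : Matrix (Fin n) (Fin n) ℂ) : Prop :=
  ∃ U S : Matrix (Fin n) (Fin n) ℂ,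
    U ∈ Matrix.unitaryGroup (Fin n) ℂ ∧ S = Sᵀ ∧ T = U * S * Uᴴ

theorem uecsm_of_signature_symmetry (n : ℕ) (hn : 0 < n)
    (T : Matrix (Fin n) (Fin n) ℂ)
    (U : Matrix (Fin n) (Fin n) ℂ)
    (hU : U = Matrix.diagonal (fun i : Fin n => if (i : ℕ) = n - 1 then (-1 : ℂ) else 1))
    (h : T = U * Tᴴ * U) :
    UECSM T := by
  have hn' : n - 1 < n := Nat.sub_lt hn one_pos
  set e : Fin n → ℂ := fun i => if (i : ℕ) = n - 1 then 1 else 0 with he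
  -- U as 1 - 2 • e eᵀ
  have hUe : U = 1 - (2 : ℂ) • vecMulVec e e := by
    rw [hU]
    ext i j
    simp only [Matrix.sub_apply, Matrix.smul_apply, vecMulVec_apply, he, smul_eq_mul]
    by_cases hi : (i : ℕ) = n - 1 <;> by_cases hj : (j : ℕ) = n - 1
    · have hij : i = j := Fin.val_injective (hi.trans hj.symm)
      subst hij
      simp only [diagonal_apply_eq, one_apply_eq, hi, if_true]
      norm_num
    · have hij : i ≠ j := fun hh => hj (hh ▸ hi)
      simp [diagonal_apply_ne _ hij, one_apply_ne hij, hj]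
    · have hij : i ≠ j := fun hh => hi (hh.symm ▸ hj)
      simp [diagonal_apply_ne _ hij, one_apply_ne hij, hi]
    · rcases eq_or_ne i j with rfl | hij
      · simp [hi]
      · simp [diagonal_apply_ne _ hij, one_apply_ne hij, hi, hj]
  have hee : e ⬝ᵥ e = 1 := by
    have : ∀ i : Fin n, ((i : ℕ) = n - 1) = (i = ⟨n - 1, hn'⟩) := by
      intro i; simp [Fin.ext_iff]
    simp only [dotProduct, he, this, ite_mul, one_mul, zero_mul]
    simp [Finset.sum_ite_eq']
  have hse0 : star e = e := by
    funext i; by_cases hi : (i : ℕ) = n - 1 <;> simp [he, hi]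
  have hUU : U * U = 1 := by
    have key : (fun i : Fin n => (if (i : ℕ) = n - 1 then (-1 : ℂ) else 1) *
        (if (i : ℕ) = n - 1 then (-1 : ℂ) else 1)) = fun _ => 1 := by
      funext i; by_cases hi : (i : ℕ) = n - 1 <;> simp [hi]
    rw [hU, diagonal_mul_diagonal, key, diagonal_one]
  have hUH : Uᴴ = U := by
    have key : (star fun i : Fin n => if (i : ℕ) = n - 1 then (-1 : ℂ) else 1) =
        fun i : Fin n => if (i : ℕ) = n - 1 then (-1 : ℂ) else 1 := by
      funext i; by_cases hi : (i : ℕ) = n - 1 <;> simp [hi]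
    rw [hU, diagonal_conjTranspose, key]
  -- A = T U is Hermitian
  set A : Matrix (Fin n) (Fin n) ℂ := T * U with hAdef
  have hTU : A = U * Tᴴ := by
    rw [hAdef]
    conv_lhs => rw [h]
    rw [mul_assoc, mul_assoc, hUU, mul_one]
  have hA : A.IsHermitian := by
    show Aᴴ = A
    rw [hAdef, conjTranspose_mul, hUH, ← hAdef, hTU]
  have hT : T = A * U := by
    rw [hAdef, mul_assoc, hUU, mul_one]
  -- spectral theorem
  set V : Matrix (Fin n) (Fin n) ℂ := (hA.eigenvectorUnitary : Matrix (Fin n) (Fin n) ℂ) with hVdef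
  set D : Matrix (Fin n) (Fin n) ℂ :=
    diagonal (RCLike.ofReal ∘ hA.eigenvalues) with hDdef
  have hspec : A = V * D * Vᴴ := by
    rw [hVdef, hDdef, ← Matrix.star_eq_conjTranspose]
    exact hA.spectral_theorem
  have hVmem := hA.eigenvectorUnitary.2
  have hV1 : V * Vᴴ = 1 := by
    simpa [Matrix.star_eq_conjTranspose] using (Matrix.mem_unitaryGroup_iff.mp hVmem)
  have hV2 : Vᴴ * V = 1 := by
    simpa [Matrix.star_eq_conjTranspose] using (Matrix.mem_unitaryGroup_iff'.mp hVmem)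
  -- w and M
  set w : Fin n → ℂ := Vᴴ *ᵥ e with hwdef
  have hse : star w = e ᵥ* V := by
    rw [hwdef, star_mulVec, hse0, conjTranspose_conjTranspose]
  set M : Matrix (Fin n) (Fin n) ℂ := Vᴴ * U * V with hMdef
  have hM : M = 1 - (2 : ℂ) • vecMulVec w (star w) := by
    rw [hMdef, hUe, mul_sub, sub_mul, mul_one, hV2, Matrix.mul_smul, Matrix.smul_mul,
      _root_.mul_vecMulVec, _root_.vecMulVec_mul, ← hwdef, ← hse]
  -- phases
  set dl : Fin n → ℂ := fun j => if w j = 0 then 1 else (starRingEnd ℂ) (w j) / (‖w j‖ : ℂ) with hdl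
  set v : Fin n → ℂ := fun j => (‖w j‖ : ℂ) with hv
  have habs : ∀ j, (starRingEnd ℂ) (w j) * w j = v j * v j := by
    intro j
    simp only [hv]
    rw [mul_comm, Complex.mul_conj, Complex.normSq_eq_norm_sq]
    push_cast
    ring
  have hd1 : ∀ j, dl j * w j = v j := by
    intro j
    by_cases hj : w j = 0
    · simp [hdl, hv, hj]
    · have hr : (‖w j‖ : ℂ) ≠ 0 := by
        simpa using hj
      simp only [hdl, hv, hj, ite_false]
      rw [div_mul_eq_mul_div, mul_comm, Complex.mul_conj, Complex.normSq_eq_norm_sq, div_eq_iff hr]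
      push_cast
      ring
  have hd2 : ∀ j, dl j * star (dl j) = 1 := by
    intro j
    by_cases hj : w j = 0
    · simp [hdl, hj]
    · have hr : (‖w j‖ : ℂ) ≠ 0 := by
        simpa using hj
      simp only [hdl, hj, ite_false, RCLike.star_def, map_div₀, Complex.conj_conj,
        Complex.conj_ofReal]
      rw [div_mul_div_comm, mul_comm ((starRingEnd ℂ) (w j)), Complex.mul_conj,
        Complex.normSq_eq_norm_sq, div_eq_one_iff_eq (mul_ne_zero hr hr)]
      push_cast
      ring
  have hsv : star v = v := by
    funext j
    simp [hv, Complex.conj_ofReal]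
  set Dl : Matrix (Fin n) (Fin n) ℂ := diagonal dl with hDl
  have hfun : dl * star dl = 1 := by
    funext j
    simpa [Pi.mul_apply, Pi.star_apply] using hd2 j
  have hfun' : star dl * dl = 1 := by
    funext j
    simp only [Pi.mul_apply, Pi.star_apply, Pi.one_apply]
    rw [mul_comm]
    exact hd2 j
  have hDl1 : Dl * Dlᴴ = 1 := by
    rw [hDl, diagonal_conjTranspose, diagonal_mul_diagonal]
    ext i j
    rcases eq_or_ne i j with rfl | hij
    · rw [diagonal_apply_eq, one_apply_eq]
      exact hd2 i
    · rw [diagonal_apply_ne _ hij, one_apply_ne hij]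
  have hDl2 : Dlᴴ * Dl = 1 := by
    rw [hDl, diagonal_conjTranspose, diagonal_mul_diagonal]
    ext i j
    rcases eq_or_ne i j with rfl | hij
    · rw [diagonal_apply_eq, one_apply_eq, mul_comm]
      exact hd2 i
    · rw [diagonal_apply_ne _ hij, one_apply_ne hij]
  have hΔw : Dl *ᵥ w = v := by
    funext j
    rw [hDl, mulVec_diagonal]
    exact hd1 j
  have hΔw2 : star w ᵥ* Dlᴴ = v := by
    funext j
    rw [hDl, diagonal_conjTranspose, vecMul_diagonal]
    simp only [Pi.star_apply]
    rw [← StarMul.star_mul, hd1 j]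
    exact congrFun hsv j
  -- P
  set P : Matrix (Fin n) (Fin n) ℂ := vecMulVec v v with hPdef
  have hvv1 : v ⬝ᵥ v = 1 := by
    have h1 : v ⬝ᵥ v = star w ⬝ᵥ w := by
      simp only [dotProduct, Pi.star_apply]
      exact Finset.sum_congr rfl fun j _ => (habs j).symm
    rw [h1, hse, hwdef, dotProduct_mulVec, vecMul_vecMul, hV1, vecMul_one, hee]
  have hPP : P * P = P := by
    rw [hPdef, _root_.vecMulVec_mul_vecMulVec, hvv1, one_smul]
  have hPt : Pᵀ = P := by
    rw [hPdef]
    ext i j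
    simp [transpose_apply, vecMulVec_apply, mul_comm]
  have hPH : Pᴴ = P := by
    have hsvj : ∀ j, star (v j) = v j := fun j => congrFun hsv j
    rw [hPdef]
    ext i j
    simp [conjTranspose_apply, vecMulVec_apply, hsvj, mul_comm]
  have hMM : Dl * M * Dlᴴ = 1 + (-2 : ℂ) • P := by
    rw [hM, mul_sub, sub_mul, mul_one, hDl1, Matrix.mul_smul, Matrix.smul_mul,
      _root_.mul_vecMulVec, _root_.vecMulVec_mul, hΔw, hΔw2, ← hPdef, sub_eq_add_neg, ← neg_smul]
  -- W
  set W : Matrix (Fin n) (Fin n) ℂ := 1 + (Complex.I - 1) • P with hWdef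
  have hWH : Wᴴ = 1 + (-Complex.I - 1) • P := by
    have hst : star (Complex.I - 1) = -Complex.I - 1 := by
      simp [RCLike.star_def, map_sub, Complex.conj_I]
    rw [hWdef, conjTranspose_add, conjTranspose_one, conjTranspose_smul, hPH, hst]
  have hWt : Wᵀ = W := by
    rw [hWdef, transpose_add, transpose_one, transpose_smul, hPt]
  have hWW : W * Wᴴ = 1 := by
    rw [hWdef, hWH, one_add_smul_mul P hPP _ _ 0 (by linear_combination -Complex.I_sq),
      zero_smul, add_zero]
  have hWHW : Wᴴ * W = 1 := by
    rw [hWdef, hWH, one_add_smul_mul P hPP _ _ 0 (by linear_combination -Complex.I_sq),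
      zero_smul, add_zero]
  have hW2 : W * W = 1 + (-2 : ℂ) • P := by
    rw [hWdef, one_add_smul_mul P hPP _ _ (-2) (by linear_combination Complex.I_sq)]
  have hWH2 : Wᴴ * Wᴴ = 1 + (-2 : ℂ) • P := by
    rw [hWH, one_add_smul_mul P hPP _ _ (-2) (by linear_combination Complex.I_sq)]
  have hMM2 : (1 + (-2 : ℂ) • P) * (1 + (-2 : ℂ) • P) = 1 := by
    rw [one_add_smul_mul P hPP _ _ 0 (by ring), zero_smul, add_zero]
  -- S and final assembly
  set S : Matrix (Fin n) (Fin n) ℂ := Wᴴ * (D * (1 + (-2 : ℂ) • P)) * W with hSdef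
  have hDt : Dᵀ = D := by rw [hDdef, diagonal_transpose]
  have hM2t : (1 + (-2 : ℂ) • P)ᵀ = 1 + (-2 : ℂ) • P := by
    rw [transpose_add, transpose_one, transpose_smul, hPt]
  have hWHt : (Wᴴ)ᵀ = Wᴴ := by
    rw [hWH, transpose_add, transpose_one, transpose_smul, hPt]
  have hSt : Sᵀ = W * ((1 + (-2 : ℂ) • P) * D) * Wᴴ := by
    rw [hSdef, transpose_mul, transpose_mul, transpose_mul, hWt, hWHt, hM2t, hDt, ← mul_assoc]
  have conj_id : ∀ X : Matrix (Fin n) (Fin n) ℂ, Wᴴ * (W * X * Wᴴ) * W = X := by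
    intro X
    simp only [← mul_assoc]
    rw [hWHW, one_mul, mul_assoc, hWHW, mul_one]
  have cancel : ∀ X Y : Matrix (Fin n) (Fin n) ℂ, W * X * Wᴴ = W * Y * Wᴴ → X = Y := by
    intro X Y hxy
    have h2 : Wᴴ * (W * X * Wᴴ) * W = Wᴴ * (W * Y * Wᴴ) * W := by rw [hxy]
    rwa [conj_id, conj_id] at h2
  have hS1 : W * S * Wᴴ = D * (1 + (-2 : ℂ) • P) := by
    rw [hSdef]
    simp only [← mul_assoc]
    rw [hWW, one_mul, mul_assoc, hWW, mul_one]
  have hS2 : W * Sᵀ * Wᴴ = D * (1 + (-2 : ℂ) • P) := by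
    rw [hSt]
    simp only [← mul_assoc]
    rw [hW2, hMM2, one_mul, mul_assoc, hWH2]
  have hSsym : S = Sᵀ := cancel _ _ (hS1.trans hS2.symm)
  -- the chain back to T
  have hTVM : T = V * (D * M) * Vᴴ := by
    rw [hT, hspec, hMdef]
    simp only [← mul_assoc]
    rw [mul_assoc _ V Vᴴ, hV1, mul_one]
  have hcomm : D * Dlᴴ = Dlᴴ * D := by
    rw [hDdef, hDl, diagonal_conjTranspose, diagonal_mul_diagonal, diagonal_mul_diagonal]
    ext i j
    rcases eq_or_ne i j with rfl | hij
    · rw [diagonal_apply_eq, diagonal_apply_eq, mul_comm]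
    · rw [diagonal_apply_ne _ hij, diagonal_apply_ne _ hij]
  have hMeq : M = Dlᴴ * (1 + (-2 : ℂ) • P) * Dl := by
    rw [← hMM]
    simp only [← mul_assoc]
    rw [hDl2, one_mul, mul_assoc, hDl2, mul_one]
  have hDM : D * M = Dlᴴ * (D * (1 + (-2 : ℂ) • P)) * Dl := by
    rw [hMeq]
    simp only [← mul_assoc]
    rw [hcomm]
  have final : V * Dlᴴ * W * S * (Wᴴ * (Dl * Vᴴ)) = T := by
    calc V * Dlᴴ * W * S * (Wᴴ * (Dl * Vᴴ))
        = V * (Dlᴴ * (W * S * Wᴴ) * Dl) * Vᴴ := by simp only [mul_assoc]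
      _ = V * (Dlᴴ * (D * (1 + (-2 : ℂ) • P)) * Dl) * Vᴴ := by rw [hS1]
      _ = V * (D * M) * Vᴴ := by rw [← hDM]
      _ = T := hTVM.symm
  refine ⟨V * Dlᴴ * W, S, ?_, hSsym, ?_⟩
  · rw [Matrix.mem_unitaryGroup_iff, Matrix.star_eq_conjTranspose,
      conjTranspose_mul, conjTranspose_mul, conjTranspose_conjTranspose]
    simp only [← mul_assoc]
    rw [mul_assoc _ W Wᴴ, hWW, mul_one, mul_assoc V Dlᴴ Dl, hDl2, mul_one, hV1]
  · rw [conjTranspose_mul, conjTranspose_mul, conjTranspose_conjTranspose]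
    exact final.symm
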